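/- Let Φ be a linear two-parameter family of bounded linear operators Φ_{t,s} : X_s → X_t between normed spaces indexed by s ≤ t, satisfying the evolution property Φ_{t,w} = Φ_{t,s} ∘ Φ_{s,w} for w ≤ s ≤ t. Suppose γ₁ < γ₂ are real numbers such that Φ admits an exponential dichotomy with growth rate γ₁ (decomposition X_t = U₁(t) ⊕ S₁(t), constants K₁, α₁) and with growth rate γ₂ (decomposition X_t = U₂(t) ⊕ S₂(t), constants K₂, α₂). Then S₁(t) ⊆ S₂(t) for all t. -/

import Mathlib

/-- `Φ` admits an exponential dichotomy with growth rate `γ`, constants `K`, `a`,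
and invariant decomposition `X t = U t ⊕ S t`. -/
def ExpDichotomy {X : ℝ → Type*} [∀ t, NormedAddCommGroup (X t)]
    [∀ t, NormedSpace ℝ (X t)]
    (Φ : ∀ s t : ℝ, s ≤ t → (X s →L[ℝ] X t)) (γ : ℝ)
    (U S : ∀ t, Submodule ℝ (X t)) (K a : ℝ) : Prop :=
  0 < K ∧ 0 < a ∧
  (∀ t, IsCompl (U t) (S t)) ∧
  (∀ s t (h : s ≤ t), ∀ x ∈ S s, Φ s t h x ∈ S t) ∧
  (∀ s t (h : s ≤ t), ∀ x ∈ U s, Φ s t h x ∈ U t) ∧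
  (∀ s t (h : s ≤ t), ∀ x ∈ S s,
    ‖Φ s t h x‖ ≤ K * Real.exp ((γ - a) * (t - s)) * ‖x‖) ∧
  (∀ s t (h : s ≤ t), ∀ x ∈ U s,
    ‖Φ s t h x‖ ≥ K⁻¹ * Real.exp ((γ + a) * (t - s)) * ‖x‖)

theorem stable_subspaces_monotone
    {X : ℝ → Type*} [∀ t, NormedAddCommGroup (X t)] [∀ t, NormedSpace ℝ (X t)]
    (Φ : ∀ s t : ℝ, s ≤ t → (X s →L[ℝ] X t))
    (hid : ∀ s, Φ s s le_rfl = ContinuousLinearMap.id ℝ (X s))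
    (hcoc : ∀ w s t (h₁ : w ≤ s) (h₂ : s ≤ t) (x : X w),
      Φ w t (h₁.trans h₂) x = Φ s t h₂ (Φ w s h₁ x))
    (γ₁ γ₂ : ℝ) (hγ : γ₁ < γ₂)
    (U₁ S₁ U₂ S₂ : ∀ t, Submodule ℝ (X t)) (K₁ a₁ K₂ a₂ : ℝ)
    (h₁ : ExpDichotomy Φ γ₁ U₁ S₁ K₁ a₁)
    (h₂ : ExpDichotomy Φ γ₂ U₂ S₂ K₂ a₂) :
    ∀ t, S₁ t ≤ S₂ t := by
  obtain ⟨hK₁, ha₁, hcompl₁, hSinv₁, hUinv₁, hSb₁, hUb₁⟩ := h₁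
  obtain ⟨hK₂, ha₂, hcompl₂, hSinv₂, hUinv₂, hSb₂, hUb₂⟩ := h₂
  intro t x hx
  have hxtop : x ∈ U₂ t ⊔ S₂ t := by
    rw [(hcompl₂ t).sup_eq_top]; trivial
  obtain ⟨u, hu, s, hs, hus⟩ := Submodule.mem_sup.1 hxtop
  have key : ∀ τ : ℝ, 0 ≤ τ →
      ‖u‖ ≤ K₂ * K₁ * Real.exp ((γ₁ - a₁ - (γ₂ + a₂)) * τ) * ‖x‖
        + K₂ * K₂ * Real.exp (-(2 * a₂) * τ) * ‖s‖ := by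
    intro τ hτ
    have hle : t ≤ t + τ := by linarith
    set E := Real.exp ((γ₂ + a₂) * τ) with hE_def
    have hE : 0 < E := Real.exp_pos _
    have h1 : ‖Φ t (t + τ) hle x‖ ≤ K₁ * Real.exp ((γ₁ - a₁) * τ) * ‖x‖ := by
      have := hSb₁ t (t + τ) hle x hx; simpa using this
    have h2 : ‖Φ t (t + τ) hle s‖ ≤ K₂ * Real.exp ((γ₂ - a₂) * τ) * ‖s‖ := by
      have := hSb₂ t (t + τ) hle s hs; simpa using this
    have h3 : K₂⁻¹ * E * ‖u‖ ≤ ‖Φ t (t + τ) hle u‖ := by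
      have := hUb₂ t (t + τ) hle u hu; simpa [hE_def] using this
    have h4 : ‖Φ t (t + τ) hle u‖ ≤ ‖Φ t (t + τ) hle x‖ + ‖Φ t (t + τ) hle s‖ := by
      have heq : Φ t (t + τ) hle u = Φ t (t + τ) hle x - Φ t (t + τ) hle s := by
        rw [← hus]; simp
      rw [heq]; exact norm_sub_le _ _
    have hch : K₂⁻¹ * E * ‖u‖ ≤
        K₁ * Real.exp ((γ₁ - a₁) * τ) * ‖x‖ + K₂ * Real.exp ((γ₂ - a₂) * τ) * ‖s‖ :=
      h3.trans (h4.trans (add_le_add h1 h2))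
    have hEu : E * ‖u‖ ≤
        K₂ * (K₁ * Real.exp ((γ₁ - a₁) * τ) * ‖x‖ + K₂ * Real.exp ((γ₂ - a₂) * τ) * ‖s‖) := by
      have := mul_le_mul_of_nonneg_left hch hK₂.le
      have hcancel : K₂ * (K₂⁻¹ * E * ‖u‖) = E * ‖u‖ := by
        field_simp
      linarith [this, hcancel.symm.le]
    have hdiv : ‖u‖ ≤
        K₂ * (K₁ * Real.exp ((γ₁ - a₁) * τ) * ‖x‖ + K₂ * Real.exp ((γ₂ - a₂) * τ) * ‖s‖) / E :=
      (le_div_iff₀ hE).2 (by linarith [mul_comm ‖u‖ E])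
    have hexp1 : Real.exp ((γ₁ - a₁ - (γ₂ + a₂)) * τ) = Real.exp ((γ₁ - a₁) * τ) / E := by
      rw [hE_def, ← Real.exp_sub]; ring_nf
    have hexp2 : Real.exp (-(2 * a₂) * τ) = Real.exp ((γ₂ - a₂) * τ) / E := by
      rw [hE_def, ← Real.exp_sub]; ring_nf
    rw [hexp1, hexp2]
    calc ‖u‖ ≤ K₂ * (K₁ * Real.exp ((γ₁ - a₁) * τ) * ‖x‖
          + K₂ * Real.exp ((γ₂ - a₂) * τ) * ‖s‖) / E := hdiv
      _ = K₂ * K₁ * (Real.exp ((γ₁ - a₁) * τ) / E) * ‖x‖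
          + K₂ * K₂ * (Real.exp ((γ₂ - a₂) * τ) / E) * ‖s‖ := by
          field_simp
  -- the bound tends to 0
  have hc₁ : γ₁ - a₁ - (γ₂ + a₂) < 0 := by linarith
  have hc₂ : -(2 * a₂) < 0 := by linarith
  have hlim : Filter.Tendsto
      (fun τ => K₂ * K₁ * Real.exp ((γ₁ - a₁ - (γ₂ + a₂)) * τ) * ‖x‖
        + K₂ * K₂ * Real.exp (-(2 * a₂) * τ) * ‖s‖)
      Filter.atTop (nhds 0) := by
    have t1 : Filter.Tendsto (fun τ : ℝ => (γ₁ - a₁ - (γ₂ + a₂)) * τ)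
        Filter.atTop Filter.atBot := Filter.Tendsto.const_mul_atTop_of_neg hc₁ Filter.tendsto_id
    have t2 : Filter.Tendsto (fun τ : ℝ => (-(2 * a₂)) * τ)
        Filter.atTop Filter.atBot := Filter.Tendsto.const_mul_atTop_of_neg hc₂ Filter.tendsto_id
    have e1 : Filter.Tendsto (fun τ : ℝ => Real.exp ((γ₁ - a₁ - (γ₂ + a₂)) * τ))
        Filter.atTop (nhds 0) := Real.tendsto_exp_atBot.comp t1
    have e2 : Filter.Tendsto (fun τ : ℝ => Real.exp (-(2 * a₂) * τ))
        Filter.atTop (nhds 0) := Real.tendsto_exp_atBot.comp t2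
    have := ((e1.const_mul (K₂ * K₁)).mul_const ‖x‖).add
      ((e2.const_mul (K₂ * K₂)).mul_const ‖s‖)
    simpa using this
  have hu0 : ‖u‖ ≤ 0 :=
    ge_of_tendsto hlim (Filter.eventually_atTop.2 ⟨0, fun τ hτ => key τ hτ⟩)
  have : u = 0 := norm_le_zero_iff.1 hu0
  rw [← hus, this, zero_add]
  exact hs
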